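/- Fix an integer d_i ≥ 1 and u_λ > 1. The function ξ(x) = (u_λ^{d_i} − (u_λ − x)^{d_i})/x is decreasing on [u_λ − 1, u_λ]. -/

import Mathlib

open Real Set

theorem stmt_13 (dᵢ : ℕ) (hd : 1 ≤ dᵢ) (u : ℝ) (hu : 1 < u)
    (hconv : 1 + (u - 1) * dᵢ - u ^ dᵢ ≤ 0) :
    AntitoneOn (fun x : ℝ => (u ^ dᵢ - (u - x) ^ dᵢ) / x) (Set.Icc (u - 1) u) := by
  have key : ∀ x : ℝ, x ≠ 0 →
      (u ^ dᵢ - (u - x) ^ dᵢ) / x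
        = ∑ i ∈ Finset.range dᵢ, u ^ i * (u - x) ^ (dᵢ - 1 - i) := by
    intro x hx
    have h := geom_sum₂_mul u (u - x) dᵢ
    rw [show u - (u - x) = x by ring] at h
    field_simp [h]
    linear_combination -h
  intro a ha b hb hab
  have ha0 : 0 < a := lt_of_lt_of_le (by linarith) ha.1
  have hb0 : 0 < b := lt_of_lt_of_le (by linarith) hb.1
  simp only
  rw [key a ha0.ne', key b hb0.ne']
  apply Finset.sum_le_sum
  intro i _
  apply mul_le_mul_of_nonneg_left _ (pow_nonneg (by linarith) i)
  exact pow_le_pow_left₀ (by linarith [hb.2]) (by linarith) _
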